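/- In the setting of the half-return map of the right half-system, with λ_R < 0, ω_R > 0, P_R(q) < ζ_R < q, and T_R(q) defined implicitly by q − ζ_R = ξ_R e^{−λ_R T_R} ρ(ω_R T_R; λ_R/ω_R)/sin(ω_R T_R), the derivative of the return time satisfies dT_R/dq = −e^{λ_R T_R} sin(ω_R T_R) / (ω_R (P_R − ζ_R)); in particular dT_R/dq > 0 for T_R ∈ (0, π/ω_R), so T_R is strictly increasing in q. -/

import Mathlib

open Set Real

/-- The auxiliary function ρ(s; ν) = 1 − e^{νs}(cos s − ν sin s). -/
noncomputable def rho (s ν : ℝ) : ℝ := 1 - Real.exp (ν * s) * (Real.cos s - ν * Real.sin s)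

/-- Derivative of the return time: `dT_R/dq = −e^{λ_R T_R} sin(ω_R T_R)/(ω_R (P_R − ζ_R))`,
which is positive, so `T_R` is strictly increasing. -/
lemma aux_deriv (ν s : ℝ) (hs : Real.sin s ≠ 0) :
    HasDerivAt (fun x => (Real.exp (-ν * x) - Real.cos x + ν * Real.sin x) / Real.sin x)
      (rho s (-ν) / (Real.sin s) ^ 2) s := by
  have hnum : HasDerivAt (fun x => Real.exp (-ν * x) - Real.cos x + ν * Real.sin x)
      (-ν * Real.exp (-ν * s) + Real.sin s + ν * Real.cos s) s := by
    have he : HasDerivAt (fun x => Real.exp (-ν * x)) (Real.exp (-ν * s) * (-ν)) s := by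
      simpa using ((hasDerivAt_id s).const_mul (-ν)).exp
    have := (he.sub (Real.hasDerivAt_cos s)).add ((Real.hasDerivAt_sin s).const_mul ν)
    exact this.congr_deriv (by ring)
  have := hnum.div (Real.hasDerivAt_sin s) hs
  refine this.congr_deriv ?_
  unfold rho
  field_simp
  nlinarith [Real.sin_sq_add_cos_sq s]

theorem stmt_12 (lamR omR ξR ζR : ℝ) (hlamR : lamR < 0) (homR : omR > 0)
    (T P : ℝ → ℝ)
    (hrange : ∀ q ∈ Ioi ζR, T q ∈ Ioo 0 (Real.pi / omR))
    (horder : ∀ q ∈ Ioi ζR, P q < ζR)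
    (himpT : ∀ q ∈ Ioi ζR,
      q - ζR = ξR * Real.exp (-lamR * T q) * rho (omR * T q) (lamR / omR)
                 / Real.sin (omR * T q))
    (himpP : ∀ q ∈ Ioi ζR,
      P q - ζR = -ξR * Real.exp (lamR * T q) * rho (omR * T q) (-lamR / omR)
                 / Real.sin (omR * T q))
    (hdiff : ∀ q ∈ Ioi ζR, DifferentiableAt ℝ T q) :
    (∀ q ∈ Ioi ζR,
      HasDerivAt T
        (-(Real.exp (lamR * T q) * Real.sin (omR * T q)) / (omR * (P q - ζR))) q) ∧
    (∀ q ∈ Ioi ζR,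
      -(Real.exp (lamR * T q) * Real.sin (omR * T q)) / (omR * (P q - ζR)) > 0) ∧
    StrictMonoOn T (Ioi ζR) := by
  set ν := lamR / omR with hν
  have hom : omR ≠ 0 := ne_of_gt homR
  have hsinpos : ∀ q ∈ Ioi ζR, 0 < Real.sin (omR * T q) := by
    intro q hq
    obtain ⟨h1, h2⟩ := hrange q hq
    apply Real.sin_pos_of_pos_of_lt_pi
    · positivity
    · calc omR * T q < omR * (Real.pi / omR) := (mul_lt_mul_iff_right₀ homR).2 h2
        _ = Real.pi := by field_simp
  have hpos : ∀ q ∈ Ioi ζR,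
      -(Real.exp (lamR * T q) * Real.sin (omR * T q)) / (omR * (P q - ζR)) > 0 := by
    intro q hq
    have hs := hsinpos q hq
    have hP := horder q hq
    apply div_pos_of_neg_of_neg
    · have : 0 < Real.exp (lamR * T q) * Real.sin (omR * T q) := by positivity
      linarith
    · nlinarith
  have hderiv : ∀ q ∈ Ioi ζR,
      HasDerivAt T
        (-(Real.exp (lamR * T q) * Real.sin (omR * T q)) / (omR * (P q - ζR))) q := by
    intro q hq
    have hs := hsinpos q hq
    have hsne : Real.sin (omR * T q) ≠ 0 := ne_of_gt hs
    have hP : P q - ζR < 0 := by linarith [horder q hq]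
    have hT : HasDerivAt T (deriv T q) q := (hdiff q hq).hasDerivAt
    set d := deriv T q with hd
    set s := omR * T q with hsdef
    have hinner : HasDerivAt (fun x => omR * T x) (omR * d) q := hT.const_mul omR
    have hcomp := ((aux_deriv ν s hsne).comp q hinner).const_mul ξR
    have hEq : ∀ q' ∈ Ioi ζR,
        ξR * ((Real.exp (-ν * (omR * T q')) - Real.cos (omR * T q')
          + ν * Real.sin (omR * T q')) / Real.sin (omR * T q')) = q' - ζR := by
      intro q' hq'
      rw [himpT q' hq']
      have e2 : ν * (omR * T q') = lamR * T q' := by rw [hν]; field_simp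
      have h1 : Real.exp (-lamR * T q') * rho (omR * T q') ν
          = Real.exp (-ν * (omR * T q')) - Real.cos (omR * T q')
            + ν * Real.sin (omR * T q') := by
        unfold rho
        rw [show -ν * (omR * T q') = -(ν * (omR * T q')) by ring, e2,
          show -lamR * T q' = -(lamR * T q') by ring, Real.exp_neg]
        have hE := Real.exp_ne_zero (lamR * T q')
        field_simp
        ring
      rw [← h1]; ring
    have hmem : Ioi ζR ∈ nhds q := (isOpen_Ioi).mem_nhds hq
    have hEv : (fun q' => ξR * ((Real.exp (-ν * (omR * T q')) - Real.cos (omR * T q')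
          + ν * Real.sin (omR * T q')) / Real.sin (omR * T q'))) =ᶠ[nhds q]
        (fun q' => q' - ζR) := Filter.eventuallyEq_of_mem hmem hEq
    have hcomp' : HasDerivAt (fun q' => q' - ζR)
        (ξR * (rho s (-ν) / Real.sin s ^ 2 * (omR * d))) q :=
      hcomp.congr_of_eventuallyEq hEv.symm
    have hone : HasDerivAt (fun q' => q' - ζR) 1 q := (hasDerivAt_id q).sub_const ζR
    have hkey : ξR * (rho s (-ν) / Real.sin s ^ 2 * (omR * d)) = 1 :=
      hcomp'.unique hone
    have hEx : Real.exp (-lamR * T q) * Real.exp (lamR * T q) = 1 := by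
      rw [← Real.exp_add]; simp
    have hrhoP : ξR * rho s (-ν)
        = -(P q - ζR) * Real.sin s * Real.exp (-lamR * T q) := by
      have h := himpP q hq
      rw [show -lamR / omR = -ν by rw [hν]; ring] at h
      rw [h]
      field_simp
      rw [mul_comm (T q) omR, ← hsdef]
      field_simp
      have hEx' : Real.exp (-(lamR * T q)) * Real.exp (lamR * T q) = 1 := by
        rw [← Real.exp_add]; simp
      linear_combination (-(ξR * rho s (-ν))) * hEx'
    have hk2 : (ξR * rho s (-ν)) * (omR * d) = Real.sin s ^ 2 := by
      have h := hkey
      field_simp at h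
      linear_combination h
    have hk3 : (-(P q - ζR) * Real.sin s * Real.exp (-lamR * T q)) * (omR * d)
        = Real.sin s ^ 2 := by
      linear_combination hk2 - (omR * d) * hrhoP
    have hk4' : (-(P q - ζR) * omR * d) * Real.sin s
        = (Real.sin s * Real.exp (lamR * T q)) * Real.sin s := by
      linear_combination Real.exp (lamR * T q) * hk3
        + (P q - ζR) * omR * d * Real.sin s * hEx
    have hk4 : -(P q - ζR) * omR * d = Real.sin s * Real.exp (lamR * T q) :=
      mul_right_cancel₀ hsne hk4'
    have hne : omR * (P q - ζR) ≠ 0 := by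
      intro h; rcases mul_eq_zero.1 h with h' | h' <;> [exact hom h'; linarith]
    have hd_eq : d = -(Real.exp (lamR * T q) * Real.sin s) / (omR * (P q - ζR)) := by
      rw [eq_div_iff hne]
      linear_combination -hk4
    rw [hd_eq] at hT
    exact hT
  refine ⟨hderiv, hpos, ?_⟩
  apply strictMonoOn_of_deriv_pos (convex_Ioi ζR)
  · intro q hq
    exact ((hdiff q hq).continuousAt).continuousWithinAt
  · intro q hq
    rw [interior_Ioi] at hq
    rw [(hderiv q hq).deriv]
    exact hpos q hq
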